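/- Counterexample non-Lebesgue point: With z as in the previous statement, for every n: (1/|B_{3r_n}(0)|) ∫_{B_{3r_n}(0)} z·e_d dx ≤ 1 − 6^{−d}. Moreover, given δ ∈ (0, 6^{−d}), if the sequence (r_n) decreases fast enough that Σ_{i>n} |B_{r_i}| ≤ δ |B_{r_n}| for all n, then (1/|B_{r_n}(0)|) ∫_{B_{r_n}(0)} z·e_d dx ≥ 1 − δ for all n. Consequently 0 is not a Lebesgue point of z. -/

import Mathlib

open MeasureTheory Metric Filter Set

set_option maxHeartbeats 1600000 in
/-- Counterexample, non-Lebesgue point: with z as in the previous statement, the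
average of z·e_d over B_{3r_n}(0) is at most 1 − 6^{−(d+1)}, while if the radii
decrease fast enough (Σ_{i>n}|B_{r_i}| ≤ δ|B_{r_n}|) the average over B_{r_n}(0)
is at least 1 − δ; consequently 0 is not a Lebesgue point of z. -/
theorem counterexample_not_lebesgue {d : ℕ}
    (r : ℕ → ℝ) (hrpos : ∀ n, 0 < r n) (hr4 : ∀ n, r (n + 1) < r n / 4)
    (hr0 : 3 * r 0 ≤ 1)
    (z : EuclideanSpace ℝ (Fin (d + 1)) → EuclideanSpace ℝ (Fin (d + 1)))
    (hzmeas : Measurable z)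
    (hzout : ∀ x, x ∉ (⋃ n, ball ((2 * r n) • EuclideanSpace.single (Fin.last d) (1 : ℝ)) (r n)) →
      z x = EuclideanSpace.single (Fin.last d) (1 : ℝ))
    (hzin : ∀ n, ∀ x ∈ ball ((2 * r n) • EuclideanSpace.single (Fin.last d) (1 : ℝ)) (r n),
      z x = ‖x - (2 * r n) • EuclideanSpace.single (Fin.last d) (1 : ℝ)‖ •
        EuclideanSpace.single (Fin.last d) (1 : ℝ)) :
    (∀ n, ∫ x in ball (0 : EuclideanSpace ℝ (Fin (d + 1))) (3 * r n),
        (inner ℝ (z x) (EuclideanSpace.single (Fin.last d) (1 : ℝ)) : ℝ) ≤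
      (1 - 1 / 6 ^ (d + 1)) *
        (volume (ball (0 : EuclideanSpace ℝ (Fin (d + 1))) (3 * r n))).toReal) ∧
    ∀ δ : ℝ, 0 < δ → δ < 1 / 6 ^ (d + 1) →
      (∀ n, (∑' i, volume (ball (0 : EuclideanSpace ℝ (Fin (d + 1))) (r (n + 1 + i)))) ≤
        ENNReal.ofReal δ * volume (ball (0 : EuclideanSpace ℝ (Fin (d + 1))) (r n))) →
      (∀ n, (1 - δ) *
          (volume (ball (0 : EuclideanSpace ℝ (Fin (d + 1))) (r n))).toReal ≤
        ∫ x in ball (0 : EuclideanSpace ℝ (Fin (d + 1))) (r n),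
          (inner ℝ (z x) (EuclideanSpace.single (Fin.last d) (1 : ℝ)) : ℝ)) ∧
      ¬ ∃ L : EuclideanSpace ℝ (Fin (d + 1)),
          Tendsto (fun ρ : ℝ => ⨍ x in ball (0 : EuclideanSpace ℝ (Fin (d + 1))) ρ, ‖z x - L‖)
            (nhdsWithin 0 (Set.Ioi 0)) (nhds 0) := by
  classical
  set e : EuclideanSpace ℝ (Fin (d + 1)) := EuclideanSpace.single (Fin.last d) (1 : ℝ) with he
  set c : ℕ → EuclideanSpace ℝ (Fin (d + 1)) := fun n => (2 * r n) • e with hc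
  set f : EuclideanSpace ℝ (Fin (d + 1)) → ℝ := fun x => (inner ℝ (z x) e : ℝ) with hf
  -- basic facts
  have hnorme : ‖e‖ = 1 := by
    rw [he, EuclideanSpace.norm_single]; norm_num
  have hee : (inner ℝ e e : ℝ) = 1 := by
    rw [real_inner_self_eq_norm_sq, hnorme]; norm_num
  have hranti : ∀ m n, m ≤ n → r n ≤ r m := by
    intro m n h
    induction n with
    | zero => simp_all
    | succ k ih =>
      rcases Nat.lt_or_ge m (k + 1) with h' | h'
      · have h1 := hr4 k
        have h2 := hrpos k
        have h3 := ih (Nat.lt_succ_iff.mp h')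
        linarith
      · have : m = k + 1 := le_antisymm h h'
        simp [this]
  have hr13 : ∀ n, r n ≤ 1 / 3 := by
    intro n
    have := hranti 0 n (Nat.zero_le n)
    linarith
  have hcnorm : ∀ n, ‖c n‖ = 2 * r n := by
    intro n
    simp only [hc, norm_smul, Real.norm_eq_abs, hnorme, mul_one]
    rw [abs_of_nonneg (by have := hrpos n; linarith)]
  -- pointwise bounds on f
  have hfbound : ∀ x, 0 ≤ f x ∧ f x ≤ 1 := by
    intro x
    by_cases hx : x ∈ ⋃ n, ball (c n) (r n)
    · obtain ⟨n, hn⟩ := mem_iUnion.mp hx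
      simp only [hf]
      rw [hzin n x hn, real_inner_smul_left, hee, mul_one]
      constructor
      · positivity
      · have h1 : ‖x - c n‖ < r n := by rwa [mem_ball, dist_eq_norm] at hn
        have := hr13 n
        linarith
    · simp only [hf]
      rw [hzout x hx, hee]
      norm_num
  have hzbound : ∀ x, ‖z x‖ ≤ 1 := by
    intro x
    by_cases hx : x ∈ ⋃ n, ball (c n) (r n)
    · obtain ⟨n, hn⟩ := mem_iUnion.mp hx
      rw [hzin n x hn, norm_smul, Real.norm_eq_abs, hnorme, mul_one,
        abs_of_nonneg (norm_nonneg _)]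
      have h1 : ‖x - c n‖ < r n := by rwa [mem_ball, dist_eq_norm] at hn
      have := hr13 n
      linarith
    · rw [hzout x hx, hnorme]
  have hfmeas : Measurable f := hzmeas.inner measurable_const
  have hfint : ∀ (x₀ : EuclideanSpace ℝ (Fin (d + 1))) (ρ : ℝ), IntegrableOn f (ball x₀ ρ) volume := by
    intro x₀ ρ
    refine Measure.integrableOn_of_bounded (M := 1) measure_ball_lt_top.ne
      hfmeas.aestronglyMeasurable (ae_of_all _ fun x => ?_)
    rw [Real.norm_eq_abs, abs_le]
    exact ⟨by linarith [(hfbound x).1], (hfbound x).2⟩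
  have hdim : Module.finrank ℝ (EuclideanSpace ℝ (Fin (d + 1))) = d + 1 := finrank_euclideanSpace_fin
  -- Part 1
  have part1 : ∀ n, ∫ x in ball (0 : EuclideanSpace ℝ (Fin (d + 1))) (3 * r n), f x ≤
      (1 - 1 / 6 ^ (d + 1)) * (volume (ball (0 : EuclideanSpace ℝ (Fin (d + 1))) (3 * r n))).toReal := by
    intro n
    set s : Set (EuclideanSpace ℝ (Fin (d + 1))) := ball 0 (3 * r n) with hs
    set B : Set (EuclideanSpace ℝ (Fin (d + 1))) := ball (c n) (r n) with hB
    have hBs : B ⊆ s := by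
      intro x hx
      rw [hB, mem_ball, dist_eq_norm] at hx
      rw [hs, mem_ball, dist_zero_right]
      calc ‖x‖ = ‖x - c n + c n‖ := by rw [sub_add_cancel]
        _ ≤ ‖x - c n‖ + ‖c n‖ := norm_add_le _ _
        _ < r n + 2 * r n := by rw [hcnorm n]; linarith
        _ = 3 * r n := by ring
    have hindint : IntegrableOn (fun x => B.indicator (fun _ => (1:ℝ)) x) s volume := by
      rw [IntegrableOn, integrable_indicator_iff measurableSet_ball]
      exact integrableOn_const measure_ball_lt_top.ne
    have hfg : ∀ x, f x ≤ 1 - (1 - r n) * B.indicator (fun _ => (1:ℝ)) x := by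
      intro x
      by_cases hx : x ∈ B
      · simp only [indicator_of_mem hx]
        simp only [hf]
        rw [hzin n x hx, real_inner_smul_left, hee, mul_one]
        have h1 : ‖x - c n‖ < r n := by rwa [mem_ball, dist_eq_norm] at hx
        linarith
      · simp only [indicator_of_notMem hx, mul_zero, sub_zero]
        exact (hfbound x).2
    have step1 : ∫ x in s, f x ≤
        ∫ x in s, (1 - (1 - r n) * B.indicator (fun _ => (1:ℝ)) x) :=
      setIntegral_mono_on (hfint 0 (3 * r n))
        ((integrableOn_const measure_ball_lt_top.ne).sub (hindint.const_mul _))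
        measurableSet_ball fun x _ => hfg x
    have step2 : ∫ x in s, (1 - (1 - r n) * B.indicator (fun _ => (1:ℝ)) x) =
        (volume s).toReal - (1 - r n) * (volume B).toReal := by
      rw [integral_sub (integrableOn_const (C := (1:ℝ)) measure_ball_lt_top.ne)
        (hindint.const_mul _)]
      rw [integral_const, integral_const_mul, setIntegral_indicator measurableSet_ball]
      rw [inter_eq_self_of_subset_right hBs, setIntegral_const]
      simp [smul_eq_mul, measureReal_def]
      rfl
    rw [step2] at step1
    refine step1.trans ?_
    -- volume computation
    have hv3 : volume s = ENNReal.ofReal (3 ^ (d + 1)) * volume (ball (0 : EuclideanSpace ℝ (Fin (d + 1))) (r n)) := by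
      rw [hs, Measure.addHaar_ball_mul_of_pos volume (0 : EuclideanSpace ℝ (Fin (d + 1))) (by norm_num : (0:ℝ) < 3), hdim]
    have hvB : volume B = volume (ball (0 : EuclideanSpace ℝ (Fin (d + 1))) (r n)) := by
      rw [hB, Measure.addHaar_ball_center]
    set V : ℝ := (volume (ball (0 : EuclideanSpace ℝ (Fin (d + 1))) (r n))).toReal with hV
    have hVpos : 0 < V :=
      ENNReal.toReal_pos (measure_ball_pos volume 0 (hrpos n)).ne' measure_ball_lt_top.ne
    have hvs : (volume s).toReal = 3 ^ (d + 1) * V := by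
      rw [hv3, ENNReal.toReal_mul, ENNReal.toReal_ofReal (by positivity)]
    have hvB' : (volume B).toReal = V := by rw [hvB]
    rw [hvs, hvB']
    have key : (1 / 6 : ℝ) ^ (d + 1) * 3 ^ (d + 1) ≤ 1 - r n := by
      have h1 : (1 / 6 : ℝ) ^ (d + 1) * 3 ^ (d + 1) = (1 / 2) ^ (d + 1) := by
        rw [← mul_pow]; norm_num
      have h2 : ((1 : ℝ) / 2) ^ (d + 1) ≤ (1 / 2) ^ 1 :=
        pow_le_pow_of_le_one (by norm_num) (by norm_num) (by omega)
      have := hr13 n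
      rw [h1]
      simp only [pow_one] at h2
      linarith
    have h6 : (1 : ℝ) / 6 ^ (d + 1) = (1 / 6) ^ (d + 1) := by rw [one_div_pow]
    rw [h6]
    nlinarith [mul_le_mul_of_nonneg_right key hVpos.le]
  refine ⟨part1, ?_⟩
  intro δ hδ0 hδ6 hsig
  -- Part 2
  have part2 : ∀ n, (1 - δ) * (volume (ball (0 : EuclideanSpace ℝ (Fin (d + 1))) (r n))).toReal ≤
      ∫ x in ball (0 : EuclideanSpace ℝ (Fin (d + 1))) (r n), f x := by
    intro n
    set s : Set (EuclideanSpace ℝ (Fin (d + 1))) := ball 0 (r n) with hs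
    set U : Set (EuclideanSpace ℝ (Fin (d + 1))) := ⋃ i, ball (c (n + 1 + i)) (r (n + 1 + i)) with hU
    have hUmeas : MeasurableSet U := MeasurableSet.iUnion fun i => measurableSet_ball
    have hfone : ∀ x ∈ s \ U, f x = 1 := by
      rintro x ⟨hxs, hxU⟩
      have hxout : x ∉ ⋃ k, ball (c k) (r k) := by
        intro hx
        obtain ⟨k, hk⟩ := mem_iUnion.mp hx
        rcases Nat.lt_or_ge n k with hkn | hkn
        · refine hxU (mem_iUnion.mpr ⟨k - n - 1, ?_⟩)
          have hkk : n + 1 + (k - n - 1) = k := by omega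
          rwa [hkk]
        · rw [mem_ball, dist_eq_norm] at hk
          rw [hs, mem_ball, dist_zero_right] at hxs
          have h1 : ‖c k‖ - ‖x‖ ≤ ‖x - c k‖ := by
            have := norm_sub_norm_le (c k) x
            rwa [norm_sub_rev] at this
          rw [hcnorm k] at h1
          have := hranti k n hkn
          linarith
      simp only [hf]
      rw [hzout x hxout, hee]
    have hsfin : volume s ≠ ⊤ := measure_ball_lt_top.ne
    have hsUfin : volume (s ∩ U) ≠ ⊤ :=
      ((measure_mono inter_subset_left).trans_lt measure_ball_lt_top).ne
    have hinter : volume (s ∩ U) ≤ ENNReal.ofReal δ * volume s := by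
      calc volume (s ∩ U) ≤ volume U := measure_mono inter_subset_right
        _ ≤ ∑' i, volume (ball (c (n + 1 + i)) (r (n + 1 + i))) := measure_iUnion_le _
        _ = ∑' i, volume (ball (0 : EuclideanSpace ℝ (Fin (d + 1))) (r (n + 1 + i))) := by
            congr 1; funext i; exact Measure.addHaar_ball_center volume _ _
        _ ≤ ENNReal.ofReal δ * volume s := hsig n
    have hdiff : (1 - δ) * (volume s).toReal ≤ (volume (s \ U)).toReal := by
      have h1 : volume (s \ U) = volume s - volume (s ∩ U) := by
        rw [← diff_self_inter]
        exact measure_diff inter_subset_left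
          (measurableSet_ball.inter hUmeas).nullMeasurableSet hsUfin
      rw [h1, ENNReal.toReal_sub_of_le (measure_mono inter_subset_left) hsfin]
      have h2 : (volume (s ∩ U)).toReal ≤ δ * (volume s).toReal := by
        have h3 := ENNReal.toReal_mono
          (ENNReal.mul_ne_top ENNReal.ofReal_ne_top hsfin) hinter
        rwa [ENNReal.toReal_mul, ENNReal.toReal_ofReal hδ0.le] at h3
      have h4 : (1 - δ) * (volume s).toReal =
          (volume s).toReal - δ * (volume s).toReal := by ring
      linarith
    have hind : ∫ x in s, (s \ U).indicator (fun _ => (1:ℝ)) x =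
        (volume (s \ U)).toReal := by
      rw [setIntegral_indicator (measurableSet_ball.diff hUmeas),
        inter_eq_self_of_subset_right diff_subset, setIntegral_const]
      simp [smul_eq_mul, measureReal_def]
    have hmono : ∫ x in s, (s \ U).indicator (fun _ => (1:ℝ)) x ≤ ∫ x in s, f x := by
      refine setIntegral_mono_on ?_ (hfint 0 (r n)) measurableSet_ball fun x _ => ?_
      · rw [IntegrableOn, integrable_indicator_iff (measurableSet_ball.diff hUmeas)]
        exact integrableOn_const
          ((measure_mono diff_subset).trans_lt measure_ball_lt_top).ne
      · by_cases hxd : x ∈ s \ U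
        · rw [indicator_of_mem hxd, hfone x hxd]
        · rw [indicator_of_notMem hxd]; exact (hfbound x).1
    calc (1 - δ) * (volume (ball (0 : EuclideanSpace ℝ (Fin (d + 1))) (r n))).toReal ≤ (volume (s \ U)).toReal := hdiff
      _ = ∫ x in s, (s \ U).indicator (fun _ => (1:ℝ)) x := hind.symm
      _ ≤ ∫ x in s, f x := hmono
  refine ⟨part2, ?_⟩
  rintro ⟨L, hL⟩
  set α : ℝ := (inner ℝ L e : ℝ) with hα
  have hnint : ∀ ρ : ℝ, IntegrableOn (fun x => ‖z x - L‖) (ball (0 : EuclideanSpace ℝ (Fin (d + 1))) ρ) volume := by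
    intro ρ
    refine Measure.integrableOn_of_bounded (M := 1 + ‖L‖) measure_ball_lt_top.ne
      ((hzmeas.sub measurable_const).norm.aestronglyMeasurable) (ae_of_all _ fun x => ?_)
    rw [Real.norm_eq_abs, abs_of_nonneg (norm_nonneg _)]
    calc ‖z x - L‖ ≤ ‖z x‖ + ‖L‖ := norm_sub_le _ _
      _ ≤ 1 + ‖L‖ := by linarith [hzbound x]
  have hkey : ∀ ρ : ℝ, 0 < ρ →
      |(⨍ x in ball (0 : EuclideanSpace ℝ (Fin (d + 1))) ρ, f x) - α| ≤ ⨍ x in ball (0 : EuclideanSpace ℝ (Fin (d + 1))) ρ, ‖z x - L‖ := by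
    intro ρ hρ
    rw [setAverage_eq, setAverage_eq, smul_eq_mul, smul_eq_mul]
    set V : ℝ := (volume (ball (0 : EuclideanSpace ℝ (Fin (d + 1))) ρ)).toReal with hV
    have hVpos : 0 < V :=
      ENNReal.toReal_pos (measure_ball_pos volume 0 hρ).ne' measure_ball_lt_top.ne
    have h1 : V⁻¹ * (∫ x in ball (0 : EuclideanSpace ℝ (Fin (d + 1))) ρ, f x) - α =
        V⁻¹ * ((∫ x in ball (0 : EuclideanSpace ℝ (Fin (d + 1))) ρ, f x) - V * α) := by
      rw [mul_sub, ← mul_assoc, inv_mul_cancel₀ hVpos.ne', one_mul]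
    have h2 : (∫ x in ball (0 : EuclideanSpace ℝ (Fin (d + 1))) ρ, f x) - V * α =
        ∫ x in ball (0 : EuclideanSpace ℝ (Fin (d + 1))) ρ, (f x - α) := by
      rw [integral_sub (hfint 0 ρ) (integrableOn_const measure_ball_lt_top.ne),
        setIntegral_const, smul_eq_mul, measureReal_def]
    have h3 : |∫ x in ball (0 : EuclideanSpace ℝ (Fin (d + 1))) ρ, (f x - α)| ≤
        ∫ x in ball (0 : EuclideanSpace ℝ (Fin (d + 1))) ρ, |f x - α| := by
      have := norm_integral_le_integral_norm
        (μ := volume.restrict (ball (0 : EuclideanSpace ℝ (Fin (d + 1))) ρ)) (fun x => f x - α)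
      simpa [Real.norm_eq_abs] using this
    have h4 : ∫ x in ball (0 : EuclideanSpace ℝ (Fin (d + 1))) ρ, |f x - α| ≤ ∫ x in ball (0 : EuclideanSpace ℝ (Fin (d + 1))) ρ, ‖z x - L‖ := by
      refine setIntegral_mono_on
        (((hfint 0 ρ).sub (integrableOn_const measure_ball_lt_top.ne)).abs)
        (hnint ρ) measurableSet_ball fun x _ => ?_
      have heq : f x - α = (inner ℝ (z x - L) e : ℝ) := by
        simp only [hf, hα, inner_sub_left]
      rw [heq]
      calc |(inner ℝ (z x - L) e : ℝ)| ≤ ‖z x - L‖ * ‖e‖ := abs_real_inner_le_norm _ _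
        _ = ‖z x - L‖ := by rw [hnorme, mul_one]
    calc |V⁻¹ * (∫ x in ball (0 : EuclideanSpace ℝ (Fin (d + 1))) ρ, f x) - α|
        = V⁻¹ * |(∫ x in ball (0 : EuclideanSpace ℝ (Fin (d + 1))) ρ, f x) - V * α| := by
          rw [h1, abs_mul, abs_of_nonneg (inv_nonneg.mpr hVpos.le)]
      _ ≤ V⁻¹ * ∫ x in ball (0 : EuclideanSpace ℝ (Fin (d + 1))) ρ, ‖z x - L‖ := by
          refine mul_le_mul_of_nonneg_left ?_ (inv_nonneg.mpr hVpos.le)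
          rw [h2]
          exact h3.trans h4
  -- r n → 0
  have hrto : Tendsto r atTop (nhds 0) := by
    have hub : ∀ n, r n ≤ r 0 * (1 / 4 : ℝ) ^ n := by
      intro n
      induction n with
      | zero => simp
      | succ k ih =>
        have h1 := hr4 k
        have h2 : r (k + 1) ≤ r 0 * (1 / 4 : ℝ) ^ k / 4 := by linarith
        calc r (k + 1) ≤ r 0 * (1 / 4 : ℝ) ^ k / 4 := h2
          _ = r 0 * (1 / 4 : ℝ) ^ (k + 1) := by ring
    have h0 : Tendsto (fun n => r 0 * (1 / 4 : ℝ) ^ n) atTop (nhds 0) := by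
      simpa using (tendsto_pow_atTop_nhds_zero_of_lt_one (by norm_num : (0:ℝ) ≤ 1/4)
        (by norm_num : (1/4 : ℝ) < 1)).const_mul (r 0)
    exact tendsto_of_tendsto_of_tendsto_of_le_of_le tendsto_const_nhds h0
      (fun n => (hrpos n).le) hub
  have h3r : Tendsto (fun n => 3 * r n) atTop (nhdsWithin 0 (Set.Ioi 0)) := by
    rw [tendsto_nhdsWithin_iff]
    refine ⟨by simpa using hrto.const_mul 3, Eventually.of_forall fun n => ?_⟩
    have := hrpos n
    exact mem_Ioi.mpr (by linarith)
  have h1r : Tendsto r atTop (nhdsWithin 0 (Set.Ioi 0)) := by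
    rw [tendsto_nhdsWithin_iff]
    exact ⟨hrto, Eventually.of_forall fun n => mem_Ioi.mpr (hrpos n)⟩
  have ha := hL.comp h3r
  have hb := hL.comp h1r
  have hsum : Tendsto (fun n => (⨍ x in ball (0 : EuclideanSpace ℝ (Fin (d + 1))) (3 * r n), ‖z x - L‖) +
      ⨍ x in ball (0 : EuclideanSpace ℝ (Fin (d + 1))) (r n), ‖z x - L‖) atTop (nhds 0) := by
    simpa using ha.add hb
  have hcrit : (0 : ℝ) < 1 / 6 ^ (d + 1) - δ := by linarith
  obtain ⟨n, hn⟩ := (hsum.eventually_lt_const hcrit).exists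
  -- contradiction at n
  have hVpos3 : 0 < (volume (ball (0 : EuclideanSpace ℝ (Fin (d + 1))) (3 * r n))).toReal :=
    ENNReal.toReal_pos (measure_ball_pos volume 0 (by have := hrpos n; linarith)).ne'
      measure_ball_lt_top.ne
  have hVpos1 : 0 < (volume (ball (0 : EuclideanSpace ℝ (Fin (d + 1))) (r n))).toReal :=
    ENNReal.toReal_pos (measure_ball_pos volume 0 (hrpos n)).ne' measure_ball_lt_top.ne
  have hA : ⨍ x in ball (0 : EuclideanSpace ℝ (Fin (d + 1))) (3 * r n), f x ≤ 1 - 1 / 6 ^ (d + 1) := by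
    rw [setAverage_eq, measureReal_def, smul_eq_mul, inv_mul_eq_div, div_le_iff₀ hVpos3]
    calc ∫ x in ball (0 : EuclideanSpace ℝ (Fin (d + 1))) (3 * r n), f x
        ≤ (1 - 1 / 6 ^ (d + 1)) * (volume (ball (0 : EuclideanSpace ℝ (Fin (d + 1))) (3 * r n))).toReal := part1 n
      _ = (1 - 1 / 6 ^ (d + 1)) * (volume (ball (0 : EuclideanSpace ℝ (Fin (d + 1))) (3 * r n))).toReal := rfl
  have hB : 1 - δ ≤ ⨍ x in ball (0 : EuclideanSpace ℝ (Fin (d + 1))) (r n), f x := by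
    rw [setAverage_eq, measureReal_def, smul_eq_mul, inv_mul_eq_div, le_div_iff₀ hVpos1]
    exact part2 n
  have hk1 := hkey (3 * r n) (by have := hrpos n; linarith)
  have hk2 := hkey (r n) (hrpos n)
  rw [abs_le] at hk1 hk2
  linarith [hk1.1, hk1.2, hk2.1, hk2.2]
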